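/- Let A and B be nonempty sets with A ⊆ B. If S ⊆ [A]^{<ℵ₁} is stationary in [A]^{<ℵ₁}, then the lift S↑B = {M ∈ [B]^{<ℵ₁} : M ∩ A ∈ S} is stationary in [B]^{<ℵ₁}. -/

import Mathlib

/-- `smallSubsets A` is `[A]^{<ℵ₁}`, the collection of countable subsets of `A`. -/
def smallSubsets {γ : Type*} (A : Set γ) : Set (Set γ) :=
  {M | M ⊆ A ∧ M.Countable}

/-- `C` is a club in `[A]^{<ℵ₁}`: a family of countable subsets of `A` that is
cofinal and closed under unions of countable increasing chains. -/
def IsClubIn {γ : Type*} (A : Set γ) (C : Set (Set γ)) : Prop :=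
  C ⊆ smallSubsets A ∧
  (∀ N ∈ smallSubsets A, ∃ M ∈ C, N ⊆ M) ∧
  (∀ D : Set (Set γ), D ⊆ C → D.Nonempty → D.Countable → IsChain (· ⊆ ·) D →
    ⋃₀ D ∈ C)

/-- `S` is stationary in `[A]^{<ℵ₁}`: a family of countable subsets of `A`
meeting every club in `[A]^{<ℵ₁}`. -/
def IsStationaryIn {γ : Type*} (A : Set γ) (S : Set (Set γ)) : Prop :=
  S ⊆ smallSubsets A ∧ ∀ C : Set (Set γ), IsClubIn A C → (S ∩ C).Nonempty

section AuxStmt8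

open Set

variable {γ : Type*}

/-- Countably many finsets inside a countable set. -/
lemma aux_countable_finsets {s : Set γ} (hs : s.Countable) :
    {e : Finset γ | ↑e ⊆ s}.Countable := by
  have h := (Set.countable_setOf_finite_subset hs).preimage (f := ((↑) : Finset γ → Set γ))
    Finset.coe_injective
  exact h.mono fun e he => show _ ∧ _ from ⟨e.finite_toSet, he⟩

/-- A finite set covered pointwise by a directed family lies inside one member. -/
lemma aux_directed_finset_subset {ι : Type*} {s : Set ι} {f : ι → Set γ}
    (hne : s.Nonempty)
    (hdir : ∀ i ∈ s, ∀ j ∈ s, ∃ k ∈ s, f i ⊆ f k ∧ f j ⊆ f k)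
    (e : Finset γ) (he : ∀ x ∈ e, ∃ i ∈ s, x ∈ f i) : ∃ i ∈ s, ↑e ⊆ f i := by
  classical
  induction e using Finset.induction_on with
  | empty => exact ⟨hne.choose, hne.choose_spec, by simp⟩
  | @insert a e ha ih =>
    obtain ⟨i, hi, hei⟩ := ih (fun x hx => he x (Finset.mem_insert_of_mem hx))
    obtain ⟨j, hj, haj⟩ := he a (Finset.mem_insert_self a e)
    obtain ⟨k, hk, hik, hjk⟩ := hdir i hi j hj
    refine ⟨k, hk, ?_⟩
    intro x hx
    simp only [Finset.coe_insert, Set.mem_insert_iff] at hx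
    rcases hx with rfl | hx
    · exact hjk haj
    · exact hik (hei hx)

/-- A finite set inside the union of a nonempty chain lies inside one member. -/
lemma aux_chain_finset_subset {𝒟 : Set (Set γ)} (hne : 𝒟.Nonempty)
    (hch : IsChain (· ⊆ ·) 𝒟) (e : Finset γ) (he : ↑e ⊆ ⋃₀ 𝒟) :
    ∃ P ∈ 𝒟, ↑e ⊆ P := by
  refine aux_directed_finset_subset hne ?_ e (fun x hx => he hx)
  intro i hi j hj
  rcases eq_or_ne i j with rfl | hij
  · exact ⟨i, hi, le_refl _, le_refl _⟩
  rcases hch hi hj hij with h | h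
  · exact ⟨j, hj, h, le_refl _⟩
  · exact ⟨i, hi, le_refl _, h⟩

/-- Finite subset of a monotone ℕ-union. -/
lemma aux_mono_finset_subset {c : ℕ → Set γ} (hmono : Monotone c)
    (e : Finset γ) (he : ↑e ⊆ ⋃ n, c n) : ∃ n, ↑e ⊆ c n := by
  have hch : IsChain (· ⊆ ·) (Set.range c) := by
    rintro _ ⟨n, rfl⟩ _ ⟨m, rfl⟩ _
    rcases le_total n m with h | h
    · exact Or.inl (hmono h)
    · exact Or.inr (hmono h)
  obtain ⟨P, ⟨n, rfl⟩, hP⟩ := aux_chain_finset_subset ⟨c 0, Set.mem_range_self 0⟩ hch e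
    (by rwa [Set.sUnion_range])
  exact ⟨n, hP⟩

/-- Monotonized choice of club members over finite sets. -/
noncomputable def auxFF (h : Set γ → Set γ) : Finset γ → Set γ := fun e =>
  h ((↑e : Set γ) ∪ ⋃ e' ∈ {e' : Finset γ | e' ⊂ e}, auxFF h e')
termination_by e => e.card
decreasing_by exact Finset.card_lt_card (by assumption)

lemma auxFF_eq (h : Set γ → Set γ) (e : Finset γ) :
    auxFF h e = h ((↑e : Set γ) ∪ ⋃ e' ∈ {e' : Finset γ | e' ⊂ e}, auxFF h e') := by
  rw [auxFF]

/-- Closure of a set under a finitary set-valued operator. -/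
def auxCl (F : Finset γ → Set γ) (Y : Set γ) : Set γ :=
  ⋂₀ {X | Y ⊆ X ∧ ∀ e : Finset γ, ↑e ⊆ X → F e ⊆ X}

lemma auxCl_least {F : Finset γ → Set γ} {Y X : Set γ} (hYX : Y ⊆ X)
    (hX : ∀ e : Finset γ, ↑e ⊆ X → F e ⊆ X) : auxCl F Y ⊆ X :=
  Set.sInter_subset_of_mem ⟨hYX, hX⟩

lemma auxCl_self (F : Finset γ → Set γ) (Y : Set γ) : Y ⊆ auxCl F Y :=
  Set.subset_sInter fun _ hX => hX.1

lemma auxCl_closed (F : Finset γ → Set γ) (Y : Set γ) (e : Finset γ)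
    (he : ↑e ⊆ auxCl F Y) : F e ⊆ auxCl F Y :=
  Set.subset_sInter fun X hX => hX.2 e (he.trans (Set.sInter_subset_of_mem hX))

lemma auxCl_mono (F : Finset γ → Set γ) {Y Y' : Set γ} (h : Y ⊆ Y') :
    auxCl F Y ⊆ auxCl F Y' :=
  auxCl_least (h.trans (auxCl_self F Y')) (auxCl_closed F Y')

section Club
variable {B : Set γ} {C : Set (Set γ)}
variable (hCsub : C ⊆ smallSubsets B)
variable {h : Set γ → Set γ}
variable (hh : ∀ X : Set γ, (X ∩ B).Countable → h X ∈ C ∧ X ∩ B ⊆ h X)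

include hCsub hh in
lemma auxFF_spec : ∀ e : Finset γ, auxFF h e ∈ C ∧ (↑e ∩ B ⊆ auxFF h e) ∧
    ∀ e' : Finset γ, e' ⊆ e → auxFF h e' ⊆ auxFF h e := by
  intro e
  induction e using Finset.strongInductionOn with
  | _ e ih =>
    set Y : Set γ := (↑e : Set γ) ∪ ⋃ e' ∈ {e' : Finset γ | e' ⊂ e}, auxFF h e' with hY
    have hYc : Y.Countable := by
      refine Set.Countable.union e.finite_toSet.countable ?_
      refine Set.Countable.biUnion ?_ (fun e' he' => ?_)
      · refine (aux_countable_finsets e.finite_toSet.countable).mono ?_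
        intro e' he'
        exact (Finset.coe_subset.2 he'.subset)
      · exact ((hCsub (ih e' he').1).2)
    have key := hh Y (hYc.mono Set.inter_subset_left)
    have heq : auxFF h e = h Y := auxFF_eq h e
    refine ⟨heq ▸ key.1, ?_, ?_⟩
    · intro x hx
      rw [heq]
      exact key.2 ⟨Or.inl hx.1, hx.2⟩
    · intro e' he'
      rcases lt_or_eq_of_le (Finset.le_iff_subset.2 he') with hlt | hqe
      · have h1 : auxFF h e' ⊆ Y := by
          intro x hx
          exact Or.inr (Set.mem_biUnion hlt hx)
        have h2 : auxFF h e' ⊆ B := (hCsub (ih e' hlt).1).1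
        rw [heq]
        exact fun x hx => key.2 ⟨h1 hx, h2 hx⟩
      · rw [hqe]

include hCsub hh in
lemma auxCl_small {Y : Set γ} (hYB : Y ⊆ B) (hYc : Y.Countable) :
    auxCl (auxFF h) Y ⊆ B ∧ (auxCl (auxFF h) Y).Countable := by
  set F := auxFF (γ := γ) h with hF
  let c : ℕ → Set γ := fun n =>
    Nat.rec Y (fun _ p => p ∪ ⋃ e ∈ {e : Finset γ | ↑e ⊆ p}, F e) n
  have hc0 : c 0 = Y := rfl
  have hcs : ∀ n, c (n+1) = c n ∪ ⋃ e ∈ {e : Finset γ | ↑e ⊆ c n}, F e := fun n => rfl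
  have hmono : Monotone c := by
    apply monotone_nat_of_le_succ
    intro n
    rw [hcs]
    exact Set.subset_union_left
  have hsmall : ∀ n, c n ⊆ B ∧ (c n).Countable := by
    intro n
    induction n with
    | zero => exact ⟨hYB, hYc⟩
    | succ n ihn =>
      rw [hcs]
      constructor
      · refine Set.union_subset ihn.1 ?_
        refine Set.iUnion₂_subset fun e he => ?_
        exact (hCsub (auxFF_spec hCsub hh e).1).1
      · refine Set.Countable.union ihn.2 ?_
        refine Set.Countable.biUnion (aux_countable_finsets ihn.2) fun e he => ?_
        exact (hCsub (auxFF_spec hCsub hh e).1).2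
  have hUle : auxCl F Y ⊆ ⋃ n, c n := by
    refine auxCl_least (hc0 ▸ Set.subset_iUnion c 0) ?_
    intro e he
    obtain ⟨n, hn⟩ := aux_mono_finset_subset hmono e he
    refine subset_trans ?_ (Set.subset_iUnion c (n+1))
    rw [hcs]
    exact subset_trans (Set.subset_biUnion_of_mem hn) Set.subset_union_right
  constructor
  · exact hUle.trans (Set.iUnion_subset fun n => (hsmall n).1)
  · exact (Set.countable_iUnion fun n => (hsmall n).2).mono hUle

include hCsub hh in
lemma auxCl_mem
    (hCchain : ∀ D : Set (Set γ), D ⊆ C → D.Nonempty → D.Countable →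
      IsChain (· ⊆ ·) D → ⋃₀ D ∈ C)
    {Y : Set γ} (hYB : Y ⊆ B) (hYc : Y.Countable) :
    auxCl (auxFF h) Y ∈ C := by
  classical
  set F := auxFF (γ := γ) h with hF
  set K := auxCl F Y with hK
  obtain ⟨hKB, hKc⟩ := auxCl_small hCsub hh hYB hYc
  have hIc : {e : Finset γ | ↑e ⊆ K}.Countable := aux_countable_finsets hKc
  have hIne : ({e : Finset γ | ↑e ⊆ K}).Nonempty := ⟨∅, by simp⟩
  obtain ⟨σ, hσ⟩ := hIc.exists_eq_range hIne
  have hσK : ∀ n, ↑(σ n) ⊆ K := by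
    intro n
    have : σ n ∈ {e : Finset γ | ↑e ⊆ K} := hσ ▸ Set.mem_range_self n
    exact this
  let t : ℕ → Finset γ := fun n => Nat.rec (σ 0) (fun m p => p ∪ σ (m+1)) n
  have ht0 : t 0 = σ 0 := rfl
  have hts : ∀ n, t (n+1) = t n ∪ σ (n+1) := fun n => rfl
  have htmono : Monotone t := by
    apply monotone_nat_of_le_succ
    intro n
    rw [hts]
    exact Finset.subset_union_left
  have hσt : ∀ n, σ n ⊆ t n := by
    intro n
    cases n with
    | zero => exact Finset.Subset.refl _
    | succ n => rw [hts]; exact Finset.subset_union_right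
  have htK : ∀ n, SetLike.coe (t n) ⊆ K := by
    intro n
    induction n with
    | zero => exact hσK 0
    | succ n ihn =>
      rw [hts]
      intro x hx
      rcases Finset.mem_union.1 hx with hx | hx
      · exact ihn hx
      · exact hσK (n+1) hx
  have hFt : ∀ n, F (t n) ∈ C := fun n => (auxFF_spec hCsub hh (t n)).1
  have hchain : IsChain (· ⊆ ·) (Set.range fun n => F (t n)) := by
    rintro _ ⟨n, rfl⟩ _ ⟨m, rfl⟩ _
    rcases le_total n m with hnm | hnm
    · exact Or.inl ((auxFF_spec hCsub hh (t m)).2.2 _ (htmono hnm))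
    · exact Or.inr ((auxFF_spec hCsub hh (t n)).2.2 _ (htmono hnm))
  have hU : ⋃₀ (Set.range fun n => F (t n)) = K := by
    rw [Set.sUnion_range]
    apply Set.Subset.antisymm
    · exact Set.iUnion_subset fun n => auxCl_closed F Y (t n) (htK n)
    · intro x hx
      have : ({x} : Finset γ) ∈ {e : Finset γ | ↑e ⊆ K} := by
        simp only [Set.mem_setOf_eq, Finset.coe_singleton, Set.singleton_subset_iff]
        exact hx
      rw [hσ] at this
      obtain ⟨n, hn⟩ := this
      have hxσ : x ∈ (↑(σ n) : Set γ) ∩ B := by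
        constructor
        · rw [hn]; simp
        · exact hKB hx
      have := (auxFF_spec hCsub hh (σ n)).2.1 hxσ
      exact Set.mem_iUnion.2 ⟨n, (auxFF_spec hCsub hh (t n)).2.2 _ (hσt n) this⟩
  have := hCchain (Set.range fun n => F (t n))
    (by rintro _ ⟨n, rfl⟩; exact hFt n)
    ⟨F (t 0), Set.mem_range_self 0⟩
    (Set.countable_range _) hchain
  rwa [hU] at this

end Club

lemma auxCl_finitary (F : Finset γ → Set γ) (Y : Set γ) :
    auxCl F Y ⊆ {x | ∃ e : Finset γ, ↑e ⊆ Y ∧ x ∈ auxCl F (↑e : Set γ)} := by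
  classical
  refine auxCl_least ?_ ?_
  · intro y hy
    refine ⟨{y}, by simpa using hy, ?_⟩
    simp only [Finset.coe_singleton]
    exact auxCl_self F {y} rfl
  · intro d hd
    have hdir : ∀ i ∈ {e : Finset γ | ↑e ⊆ Y}, ∀ j ∈ {e : Finset γ | ↑e ⊆ Y},
        ∃ k ∈ {e : Finset γ | ↑e ⊆ Y}, auxCl F (↑i : Set γ) ⊆ auxCl F (↑k : Set γ) ∧
          auxCl F (↑j : Set γ) ⊆ auxCl F (↑k : Set γ) := by
      intro i hi j hj
      refine ⟨i ∪ j, ?_, ?_, ?_⟩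
      · simp only [Set.mem_setOf_eq, Finset.coe_union]
        exact Set.union_subset hi hj
      · exact auxCl_mono F (by intro x hx; simp only [Finset.coe_union]; exact Or.inl hx)
      · exact auxCl_mono F (by intro x hx; simp only [Finset.coe_union]; exact Or.inr hx)
    obtain ⟨e, he, hde⟩ := aux_directed_finset_subset (f := fun e : Finset γ => auxCl F (↑e : Set γ))
      ⟨∅, by simp⟩ hdir d (fun x hx => hd hx)
    intro x hx
    exact ⟨e, he, auxCl_closed F _ d hde hx⟩

end AuxStmt8

/- STATEMENT 8: lifts of stationary sets are stationary. -/
theorem stmt_8 {γ : Type*} (A B : Set γ) (hA : A.Nonempty) (hB : B.Nonempty)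
    (hAB : A ⊆ B) (S : Set (Set γ)) (hS : IsStationaryIn A S) :
    IsStationaryIn B {M | M ∈ smallSubsets B ∧ M ∩ A ∈ S} := by
  classical
  obtain ⟨hSsub, hSst⟩ := hS
  refine ⟨fun M hM => hM.1, ?_⟩
  intro C hC
  obtain ⟨hCsub, hCcof, hCchain⟩ := hC
  have hex : ∀ X : Set γ, (X ∩ B).Countable → ∃ M, M ∈ C ∧ X ∩ B ⊆ M := by
    intro X hX
    obtain ⟨M, hM, hXM⟩ := hCcof (X ∩ B) ⟨Set.inter_subset_right, hX⟩
    exact ⟨M, hM, hXM⟩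
  let h : Set γ → Set γ := fun X => if hx : (X ∩ B).Countable then (hex X hx).choose else ∅
  have hh : ∀ X : Set γ, (X ∩ B).Countable → h X ∈ C ∧ X ∩ B ⊆ h X := by
    intro X hX
    have := (hex X hX).choose_spec
    simp only [h, dif_pos hX]
    exact this
  set F := auxFF (γ := γ) h with hFdef
  let DA : Set (Set γ) := {N | N ⊆ A ∧ N.Countable ∧
    ∀ e : Finset γ, ↑e ⊆ N → auxCl F (↑e : Set γ) ∩ A ⊆ N}
  have hclA : ∀ e : Finset γ, ↑e ⊆ A → ((auxCl F (↑e : Set γ)) ∩ A).Countable := by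
    intro e he
    exact ((auxCl_small hCsub hh (he.trans hAB) e.finite_toSet.countable).2).mono
      Set.inter_subset_left
  have hDA : IsClubIn A DA := by
    refine ⟨fun N hN => ⟨hN.1, hN.2.1⟩, ?_, ?_⟩
    · -- cofinal
      intro N0 hN0
      let c : ℕ → Set γ := fun n => Nat.rec N0
        (fun _ p => p ∪ ⋃ e ∈ {e : Finset γ | ↑e ⊆ p}, (auxCl F (↑e : Set γ) ∩ A)) n
      have hcs : ∀ n, c (n+1) =
          c n ∪ ⋃ e ∈ {e : Finset γ | ↑e ⊆ c n}, (auxCl F (↑e : Set γ) ∩ A) := fun n => rfl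
      have hmono : Monotone c := monotone_nat_of_le_succ
        (fun n => by rw [hcs]; exact Set.subset_union_left)
      have hsmall : ∀ n, c n ⊆ A ∧ (c n).Countable := by
        intro n
        induction n with
        | zero => exact ⟨hN0.1, hN0.2⟩
        | succ n ihn =>
          rw [hcs]
          refine ⟨Set.union_subset ihn.1
            (Set.iUnion₂_subset fun e he => Set.inter_subset_right), ?_⟩
          refine Set.Countable.union ihn.2 ?_
          refine Set.Countable.biUnion (aux_countable_finsets ihn.2) fun e he => ?_
          exact hclA e ((he : ↑e ⊆ c n).trans ihn.1)
      refine ⟨⋃ n, c n, ⟨Set.iUnion_subset fun n => (hsmall n).1,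
        Set.countable_iUnion fun n => (hsmall n).2, ?_⟩,
        (Set.subset_iUnion c 0 : N0 ⊆ _)⟩
      intro e he
      obtain ⟨n, hn⟩ := aux_mono_finset_subset hmono e he
      refine subset_trans ?_ (Set.subset_iUnion c (n+1))
      rw [hcs]
      intro x hx
      exact Or.inr (Set.mem_biUnion hn hx)
    · -- chain closure
      intro 𝒟 h𝒟 hne hcnt hch
      refine ⟨Set.sUnion_subset fun P hP => (h𝒟 hP).1,
        (Set.Countable.sUnion hcnt fun P hP => (h𝒟 hP).2.1 : _), ?_⟩
      intro e he
      obtain ⟨P, hP, heP⟩ := aux_chain_finset_subset hne hch e he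
      exact ((h𝒟 hP).2.2 e heP).trans (Set.subset_sUnion_of_mem hP)
  obtain ⟨N, hNS, hND⟩ := hSst DA hDA
  have hNA : N ⊆ A := (hSsub hNS).1
  have hNc : N.Countable := (hSsub hNS).2
  have hMC : auxCl F N ∈ C := auxCl_mem hCsub hh hCchain (hNA.trans hAB) hNc
  have hMA : auxCl F N ∩ A = N := by
    apply Set.Subset.antisymm
    · intro x hx
      obtain ⟨e, heN, hxe⟩ := auxCl_finitary F N hx.1
      exact hND.2.2 e heN ⟨hxe, hx.2⟩
    · intro x hx
      exact ⟨auxCl_self F N hx, hNA hx⟩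
  exact ⟨auxCl F N, ⟨hCsub hMC, by rw [hMA]; exact hNS⟩, hMC⟩
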